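/- arXiv:1305.5916 — 9 statements merged into one kernel-verified Lean document; each statement's English description precedes it below -/
import Mathlib

section
/- Let (α_n)_{n≥1} be a sequence in [0,1] and (a_n)_{n≥1}, (b_n)_{n≥1} sequences of nonnegative reals such that a_{n+1} ≤ (1 − α_{n+1})·a_n + b_n for all n ≥ 1. Assume γ : (0,∞) → ℤ₊ is a Cauchy modulus for ∑_{n≥1} b_n (i.e. for all ε > 0 and n ≥ 1, ∑_{i=γ(ε)+1}^{γ(ε)+n} b_i ≤ ε), θ : ℤ₊ → ℤ₊ is a rate of divergence for ∑_{n≥1} α_{n+1} (i.e. ∑_{k=1}^{θ(n)} α_{k+1} ≥ n for all n ≥ 1), and P > 0 is an upper bound on (a_n). Then for every ε > 0 and every n ≥ θ(γ(ε/2) + max{⌈ln(2P/ε)⌉, 1}) + 1 one has a_n ≤ ε. -/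
/-- Quantitative lemma on sequences of nonnegative reals: an explicit rate of
convergence to zero for sequences satisfying `a_{n+1} ≤ (1 - α_{n+1}) a_n + b_n`. -/
theorem rate_of_convergence_main_lemma
    (α a b : ℕ → ℝ)
    (hα : ∀ n, 1 ≤ n → α n ∈ Set.Icc (0 : ℝ) 1)
    (ha : ∀ n, 1 ≤ n → 0 ≤ a n) (hb : ∀ n, 1 ≤ n → 0 ≤ b n)
    (hrec : ∀ n, 1 ≤ n → a (n + 1) ≤ (1 - α (n + 1)) * a n + b n)
    (γ : ℝ → ℕ) (hγ : ∀ ε : ℝ, 0 < ε → 1 ≤ γ ε)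
    (hγmod : ∀ ε : ℝ, 0 < ε → ∀ n : ℕ, 1 ≤ n →
      (∑ i ∈ Finset.Icc (γ ε + 1) (γ ε + n), b i) ≤ ε)
    (θ : ℕ → ℕ) (hθ : ∀ n : ℕ, 1 ≤ n → 1 ≤ θ n)
    (hθdiv : ∀ n : ℕ, 1 ≤ n → (n : ℝ) ≤ ∑ k ∈ Finset.Icc 1 (θ n), α (k + 1))
    (P : ℝ) (hP : 0 < P) (haP : ∀ n, 1 ≤ n → a n ≤ P) :
    ∀ ε : ℝ, 0 < ε → ∀ n : ℕ,
      θ (γ (ε / 2) + max ⌈Real.log (2 * P / ε)⌉₊ 1) + 1 ≤ n → a n ≤ ε := by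
  intro ε hε n hn
  set N := γ (ε / 2) with hNdef
  set M := max ⌈Real.log (2 * P / ε)⌉₊ 1 with hMdef
  set T := θ (N + M) with hTdef
  have hN1 : 1 ≤ N := hγ _ (by positivity)
  have hM1 : 1 ≤ M := le_max_right _ _
  have hα0 : ∀ k, 1 ≤ k → 0 ≤ α k := fun k hk => (hα k hk).1
  have hα1 : ∀ k, 1 ≤ k → α k ≤ 1 := fun k hk => (hα k hk).2
  -- T ≥ N + M
  have hdiv := hθdiv (N + M) (by omega)
  have hTsum_le : (∑ k ∈ Finset.Icc 1 T, α (k + 1)) ≤ (T : ℝ) := by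
    calc (∑ k ∈ Finset.Icc 1 T, α (k + 1)) ≤ ∑ k ∈ Finset.Icc 1 T, (1 : ℝ) :=
          Finset.sum_le_sum fun k _ => hα1 (k + 1) (by omega)
      _ = ((Finset.Icc 1 T).card : ℝ) := by simp
      _ = (T : ℝ) := by rw [Nat.card_Icc]; simp
  have hTNM : N + M ≤ T := by exact_mod_cast hdiv.trans hTsum_le
  have hnN2 : N + 2 ≤ n := by omega
  -- key unfolding of the recurrence
  have key : ∀ m : ℕ, a (N + 1 + m) ≤
      (∏ k ∈ Finset.Icc (N + 2) (N + 1 + m), (1 - α k)) * a (N + 1)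
        + ∑ i ∈ Finset.Icc (N + 1) (N + m), b i := by
    intro m
    induction m with
    | zero =>
        rw [Finset.Icc_eq_empty (by omega), Finset.Icc_eq_empty (by omega)]
        simp
    | succ m ih =>
        have e1 : N + 1 + (m + 1) = N + m + 2 := by omega
        have e2 : N + (m + 1) = N + m + 1 := by omega
        have e3 : N + 1 + m = N + m + 1 := by omega
        rw [e1, e2]
        rw [e3] at ih
        have hα01 : 0 ≤ 1 - α (N + m + 2) ∧ 1 - α (N + m + 2) ≤ 1 := by
          have h := hα (N + m + 2) (by omega)
          exact ⟨by linarith [h.2], by linarith [h.1]⟩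
        have hprodnn : 0 ≤ ∏ k ∈ Finset.Icc (N + 2) (N + m + 1), (1 - α k) :=
          Finset.prod_nonneg fun k hk => by
            have hk' := Finset.mem_Icc.mp hk
            have h := hα k (by omega)
            linarith [h.2]
        have hsumnn : 0 ≤ ∑ i ∈ Finset.Icc (N + 1) (N + m), b i :=
          Finset.sum_nonneg fun i hi => by
            have hi' := Finset.mem_Icc.mp hi
            exact hb i (by omega)
        have h1 : a (N + m + 2) ≤ (1 - α (N + m + 2)) * a (N + m + 1) + b (N + m + 1) :=
          hrec (N + m + 1) (by omega)
        have h2 : (1 - α (N + m + 2)) * a (N + m + 1) ≤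
            (1 - α (N + m + 2)) * ((∏ k ∈ Finset.Icc (N + 2) (N + m + 1), (1 - α k)) * a (N + 1)
              + ∑ i ∈ Finset.Icc (N + 1) (N + m), b i) :=
          mul_le_mul_of_nonneg_left ih hα01.1
        have hmul : (1 - α (N + m + 2)) * (∑ i ∈ Finset.Icc (N + 1) (N + m), b i)
            ≤ ∑ i ∈ Finset.Icc (N + 1) (N + m), b i := by
          nlinarith [hα01.1, hα01.2]
        have haN1 : 0 ≤ a (N + 1) := ha _ (by omega)
        show a (N + m + 2) ≤ (∏ k ∈ Finset.Icc (N + 2) ((N + m + 1) + 1), (1 - α k)) * a (N + 1)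
              + ∑ i ∈ Finset.Icc (N + 1) ((N + m) + 1), b i
        rw [Finset.prod_Icc_succ_top (by omega), Finset.sum_Icc_succ_top (by omega)]
        nlinarith [mul_nonneg hprodnn haN1]
  -- lower bound on the α-sum over Ioc (N+1) n
  have hIcc1T : Finset.Icc 1 T = Finset.Ioc 0 T := by
    rw [← Finset.Icc_add_one_left_eq_Ioc]
    rfl
  have hsplit : (∑ k ∈ Finset.Ioc 0 N, α (k + 1)) + ∑ k ∈ Finset.Ioc N T, α (k + 1)
      = ∑ k ∈ Finset.Ioc 0 T, α (k + 1) :=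
    Finset.sum_Ioc_consecutive _ (Nat.zero_le N) (by omega)
  have h0N : (∑ k ∈ Finset.Ioc 0 N, α (k + 1)) ≤ (N : ℝ) := by
    calc (∑ k ∈ Finset.Ioc 0 N, α (k + 1)) ≤ ∑ k ∈ Finset.Ioc 0 N, (1 : ℝ) :=
          Finset.sum_le_sum fun k _ => hα1 (k + 1) (by omega)
      _ = ((Finset.Ioc 0 N).card : ℝ) := by simp
      _ = (N : ℝ) := by rw [Nat.card_Ioc]; simp
  have hre : (∑ k ∈ Finset.Ioc N T, α (k + 1)) = ∑ j ∈ Finset.Ioc (N + 1) (T + 1), α j := by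
    rw [← Finset.map_add_right_Ioc, Finset.sum_map]
    rfl
  have hMsum : (M : ℝ) ≤ ∑ j ∈ Finset.Ioc (N + 1) n, α j := by
    have h1 : (M : ℝ) ≤ ∑ j ∈ Finset.Ioc (N + 1) (T + 1), α j := by
      rw [← hre]
      rw [hIcc1T, ← hsplit] at hdiv
      push_cast at hdiv ⊢
      linarith
    refine h1.trans (Finset.sum_le_sum_of_subset_of_nonneg ?_ ?_)
    · exact Finset.Ioc_subset_Ioc_right (by omega)
    · intro i hi _
      have hi' := Finset.mem_Ioc.mp hi
      exact hα0 i (by omega)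
  -- product bound
  have hprodle : (∏ k ∈ Finset.Ioc (N + 1) n, (1 - α k)) ≤ Real.exp (-(M : ℝ)) := by
    have h1 : (∏ k ∈ Finset.Ioc (N + 1) n, (1 - α k)) ≤
        ∏ k ∈ Finset.Ioc (N + 1) n, Real.exp (-α k) := by
      refine Finset.prod_le_prod ?_ ?_
      · intro k hk
        have hk' := Finset.mem_Ioc.mp hk
        have h := hα k (by omega)
        linarith [h.2]
      · intro k _
        have := Real.add_one_le_exp (-α k)
        linarith
    have h2 : (∏ k ∈ Finset.Ioc (N + 1) n, Real.exp (-α k)) =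
        Real.exp (∑ k ∈ Finset.Ioc (N + 1) n, -α k) := (Real.exp_sum _ _).symm
    rw [h2] at h1
    refine h1.trans (Real.exp_le_exp.mpr ?_)
    rw [Finset.sum_neg_distrib]
    linarith
  have hexp : Real.exp (-(M : ℝ)) ≤ ε / (2 * P) := by
    have hlog : Real.log (2 * P / ε) ≤ (M : ℝ) := by
      refine (Nat.le_ceil _).trans ?_
      exact_mod_cast le_max_left ⌈Real.log (2 * P / ε)⌉₊ 1
    have h2P : (0 : ℝ) < 2 * P / ε := by positivity
    calc Real.exp (-(M : ℝ)) ≤ Real.exp (-Real.log (2 * P / ε)) :=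
          Real.exp_le_exp.mpr (by linarith)
      _ = (2 * P / ε)⁻¹ := by rw [Real.exp_neg, Real.exp_log h2P]
      _ = ε / (2 * P) := by field_simp
  -- assemble
  obtain ⟨m, hm1, rfl⟩ : ∃ m, 1 ≤ m ∧ n = N + 1 + m := ⟨n - (N + 1), by omega, by omega⟩
  have hkey := key m
  have hIccIoc : Finset.Icc (N + 2) (N + 1 + m) = Finset.Ioc (N + 1) (N + 1 + m) := by
    rw [← Finset.Icc_add_one_left_eq_Ioc]
    rfl
  rw [hIccIoc] at hkey
  have hS : (∑ i ∈ Finset.Icc (N + 1) (N + m), b i) ≤ ε / 2 := hγmod (ε / 2) (by positivity) m hm1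
  have haN1 : a (N + 1) ≤ P := haP _ (by omega)
  have haN1' : 0 ≤ a (N + 1) := ha _ (by omega)
  have hprodnn : 0 ≤ ∏ k ∈ Finset.Ioc (N + 1) (N + 1 + m), (1 - α k) :=
    Finset.prod_nonneg fun k hk => by
      have hk' := Finset.mem_Ioc.mp hk
      have h := hα k (by omega)
      linarith [h.2]
  have hprodle' : (∏ k ∈ Finset.Ioc (N + 1) (N + 1 + m), (1 - α k)) ≤ ε / (2 * P) :=
    hprodle.trans hexp
  have hmul : (∏ k ∈ Finset.Ioc (N + 1) (N + 1 + m), (1 - α k)) * a (N + 1) ≤ (ε / (2 * P)) * P :=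
    mul_le_mul hprodle' haN1 haN1' (by positivity)
  have hfin : (ε / (2 * P)) * P = ε / 2 := by field_simp
  linarith
end

section
/- Let ε ∈ (0,2), g : ℕ → ℕ, L > 0, θ : ℤ₊ → ℤ₊ and ψ : (0,∞) → ℤ₊. Set Θ = θ(ψ(ε/3) − 1 + max{⌈ln(3L/ε)⌉, 1}) + 1 and Δ = ε / (3·(Θ − ψ(ε/3) + g(Θ))). Assume: (i) (α_n)_{n≥1} is a sequence in [0,1] with ∑_{k=1}^{θ(n)} α_k ≥ n for all n ≥ 1; (ii) (t_n)_{n≥1} is a sequence of reals with t_n ≤ ε/3 for all n ≥ ψ(ε/3); (iii) (s_n)_{n≥1} is a sequence of reals with 0 ≤ s_n ≤ L for all n ≥ 1, satisfying s_{n+1} ≤ (1 − α_n)·s_n + α_n·t_n + Δ for all n ≥ 1. Then s_n ≤ ε for all n with Θ ≤ n ≤ Θ + g(Θ). -/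
/-- Quantitative lemma (Lemma 5.2 of Kohlenbach–Leuştean, reformulated):
metastability-type bound for sequences satisfying
`s_{n+1} ≤ (1 - α_n) s_n + α_n t_n + Δ`. -/
theorem quantitative_metastability_lemma
    (ε : ℝ) (hε0 : 0 < ε) (hε2 : ε < 2)
    (g : ℕ → ℕ) (L : ℝ) (hL : 0 < L)
    (θ : ℕ → ℕ) (hθ : ∀ n : ℕ, 1 ≤ n → 1 ≤ θ n)
    (ψ : ℝ → ℕ) (hψ : ∀ x : ℝ, 0 < x → 1 ≤ ψ x)
    (Θ : ℕ) (hΘ : Θ = θ (ψ (ε / 3) - 1 + max ⌈Real.log (3 * L / ε)⌉₊ 1) + 1)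
    (Δ : ℝ) (hΔ : Δ = ε / (3 * ((Θ - ψ (ε / 3) + g Θ : ℕ) : ℝ)))
    (α t s : ℕ → ℝ)
    (hα : ∀ n, 1 ≤ n → α n ∈ Set.Icc (0 : ℝ) 1)
    (hθdiv : ∀ n : ℕ, 1 ≤ n → (n : ℝ) ≤ ∑ k ∈ Finset.Icc 1 (θ n), α k)
    (ht : ∀ n : ℕ, ψ (ε / 3) ≤ n → t n ≤ ε / 3)
    (hs0 : ∀ n, 1 ≤ n → 0 ≤ s n) (hsL : ∀ n, 1 ≤ n → s n ≤ L)
    (hrec : ∀ n, 1 ≤ n → s (n + 1) ≤ (1 - α n) * s n + α n * t n + Δ) :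
    ∀ n : ℕ, Θ ≤ n → n ≤ Θ + g Θ → s n ≤ ε := by
  set ψ₀ := ψ (ε / 3) with hψ₀
  set N := max ⌈Real.log (3 * L / ε)⌉₊ 1 with hN
  set M := ψ₀ - 1 + N with hM
  have hψ₀1 : 1 ≤ ψ₀ := hψ (ε / 3) (by linarith)
  have hN1 : 1 ≤ N := le_max_right _ _
  have hM1 : 1 ≤ M := by omega
  -- θ n ≥ n
  have hθge : ∀ n : ℕ, 1 ≤ n → n ≤ θ n := by
    intro n hn
    have h1 := hθdiv n hn
    have h2 : (∑ k ∈ Finset.Icc 1 (θ n), α k) ≤ (θ n : ℝ) := by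
      calc (∑ k ∈ Finset.Icc 1 (θ n), α k) ≤ ∑ k ∈ Finset.Icc 1 (θ n), 1 := by
            apply Finset.sum_le_sum
            intro k hk
            exact (hα k (Finset.mem_Icc.mp hk).1).2
        _ = (θ n : ℝ) := by
            simp [Nat.card_Icc]
    exact_mod_cast le_trans h1 h2
  have hΘψ : ψ₀ + 1 ≤ Θ := by
    have := hθge M hM1
    omega
  -- positivity of Δ
  have hDpos : 0 < (Θ - ψ₀ + g Θ : ℕ) := by omega
  have hDR : (0:ℝ) < ((Θ - ψ₀ + g Θ : ℕ) : ℝ) := by exact_mod_cast hDpos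
  have hΔpos : 0 < Δ := by
    rw [hΔ]; positivity
  -- main unrolling estimate
  have key : ∀ n : ℕ, ψ₀ ≤ n →
      s n ≤ ε / 3 + L * (∏ k ∈ Finset.Ico ψ₀ n, (1 - α k)) + ((n - ψ₀ : ℕ) : ℝ) * Δ := by
    intro n hn
    induction n, hn using Nat.le_induction with
    | base =>
        simp only [Finset.Ico_self, Finset.prod_empty, Nat.sub_self, Nat.cast_zero]
        have := hsL ψ₀ hψ₀1
        linarith
    | succ n hn IH =>
        have hn1 : 1 ≤ n := le_trans hψ₀1 hn
        have hα0 := (hα n hn1).1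
        have hα1 := (hα n hn1).2
        have hc : (0:ℝ) ≤ ((n - ψ₀ : ℕ) : ℝ) := Nat.cast_nonneg _
        have h1 := hrec n hn1
        have h2 : (1 - α n) * s n ≤ (1 - α n) * (ε / 3 + L * (∏ k ∈ Finset.Ico ψ₀ n, (1 - α k)) + ((n - ψ₀ : ℕ) : ℝ) * Δ) :=
          mul_le_mul_of_nonneg_left IH (by linarith)
        have h3 : α n * t n ≤ α n * (ε / 3) :=
          mul_le_mul_of_nonneg_left (ht n hn) hα0
        rw [Finset.prod_Ico_succ_top hn]
        have hcast : ((n + 1 - ψ₀ : ℕ) : ℝ) = ((n - ψ₀ : ℕ) : ℝ) + 1 := by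
          have : n + 1 - ψ₀ = (n - ψ₀) + 1 := by omega
          rw [this]; push_cast; ring
        rw [hcast]
        nlinarith [mul_nonneg hα0 (mul_nonneg hc hΔpos.le)]
  intro n hn1 hn2
  have hψ₀n : ψ₀ ≤ n := by omega
  have hkey := key n hψ₀n
  -- bound the product
  have hprodnn : ∀ k ∈ Finset.Ico ψ₀ n, (0:ℝ) ≤ 1 - α k := by
    intro k hk
    have hk1 : 1 ≤ k := le_trans hψ₀1 (Finset.mem_Ico.mp hk).1
    have := (hα k hk1).2
    linarith
  have hprod_le : (∏ k ∈ Finset.Ico ψ₀ n, (1 - α k)) ≤ Real.exp (-(∑ k ∈ Finset.Ico ψ₀ n, α k)) := by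
    have h1 : (∏ k ∈ Finset.Ico ψ₀ n, (1 - α k)) ≤ ∏ k ∈ Finset.Ico ψ₀ n, Real.exp (-(α k)) := by
      apply Finset.prod_le_prod hprodnn
      intro k hk
      have := Real.add_one_le_exp (-(α k))
      linarith
    have h2 : (∏ k ∈ Finset.Ico ψ₀ n, Real.exp (-(α k))) = Real.exp (-(∑ k ∈ Finset.Ico ψ₀ n, α k)) := by
      rw [← Real.exp_sum, Finset.sum_neg_distrib]
    linarith [h1, h2.le]
  -- sum lower bound
  have hαnn : ∀ k, 1 ≤ k → (0:ℝ) ≤ α k := fun k hk => (hα k hk).1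
  have hsum_ge : (N : ℝ) ≤ ∑ k ∈ Finset.Ico ψ₀ n, α k := by
    have hsub : Finset.Ico ψ₀ Θ ⊆ Finset.Ico ψ₀ n := Finset.Ico_subset_Ico le_rfl hn1
    have h0 : (∑ k ∈ Finset.Ico ψ₀ Θ, α k) ≤ ∑ k ∈ Finset.Ico ψ₀ n, α k := by
      apply Finset.sum_le_sum_of_subset_of_nonneg hsub
      intro k hk _
      exact hαnn k (le_trans hψ₀1 (Finset.mem_Ico.mp hk).1)
    -- split: sum over Ico 1 Θ = sum over Ico 1 ψ₀ + sum over Ico ψ₀ Θ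
    have hsplit : (∑ k ∈ Finset.Ico 1 ψ₀, α k) + ∑ k ∈ Finset.Ico ψ₀ Θ, α k
        = ∑ k ∈ Finset.Ico 1 Θ, α k :=
      Finset.sum_Ico_consecutive _ hψ₀1 (by omega)
    have hIccIco : Finset.Icc 1 (θ M) = Finset.Ico 1 Θ := by
      rw [hΘ, Finset.Ico_add_one_right_eq_Icc]
    have hdivM : (M : ℝ) ≤ ∑ k ∈ Finset.Ico 1 Θ, α k := by
      rw [← hIccIco]; exact hθdiv M hM1
    have hupper : (∑ k ∈ Finset.Ico 1 ψ₀, α k) ≤ ((ψ₀ - 1 : ℕ) : ℝ) := by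
      calc (∑ k ∈ Finset.Ico 1 ψ₀, α k) ≤ ∑ k ∈ Finset.Ico 1 ψ₀, 1 := by
            apply Finset.sum_le_sum
            intro k hk
            exact (hα k (Finset.mem_Ico.mp hk).1).2
        _ = ((ψ₀ - 1 : ℕ) : ℝ) := by simp [Nat.card_Ico]
    have hMcast : (M : ℝ) = ((ψ₀ - 1 : ℕ) : ℝ) + (N : ℝ) := by
      rw [hM]; push_cast; ring
    linarith
  -- N ≥ log (3L/ε)
  have hNlog : Real.log (3 * L / ε) ≤ (N : ℝ) := by
    calc Real.log (3 * L / ε) ≤ (⌈Real.log (3 * L / ε)⌉₊ : ℝ) := Nat.le_ceil _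
      _ ≤ (N : ℝ) := by exact_mod_cast le_max_left _ _
  have hεL : (0:ℝ) < ε / (3 * L) := by positivity
  have hexp_le : Real.exp (-(∑ k ∈ Finset.Ico ψ₀ n, α k)) ≤ ε / (3 * L) := by
    have h1 : Real.exp (-(∑ k ∈ Finset.Ico ψ₀ n, α k)) ≤ Real.exp (-(N:ℝ)) :=
      Real.exp_le_exp.mpr (by linarith)
    have h2 : Real.exp (-(N:ℝ)) ≤ Real.exp (-Real.log (3 * L / ε)) :=
      Real.exp_le_exp.mpr (by linarith)
    have h3 : -Real.log (3 * L / ε) = Real.log (ε / (3 * L)) := by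
      rw [← Real.log_inv]
      congr 1
      field_simp
    have h4 : Real.exp (Real.log (ε / (3 * L))) = ε / (3 * L) := Real.exp_log hεL
    rw [h3, h4] at h2
    linarith
  have hprodnn' : (0:ℝ) ≤ ∏ k ∈ Finset.Ico ψ₀ n, (1 - α k) := Finset.prod_nonneg hprodnn
  have hLP : L * (∏ k ∈ Finset.Ico ψ₀ n, (1 - α k)) ≤ ε / 3 := by
    have : L * (∏ k ∈ Finset.Ico ψ₀ n, (1 - α k)) ≤ L * (ε / (3 * L)) :=
      mul_le_mul_of_nonneg_left (le_trans hprod_le hexp_le) hL.le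
    have hLe : L * (ε / (3 * L)) = ε / 3 := by field_simp
    linarith
  -- bound the Δ term
  have hcΔ : ((n - ψ₀ : ℕ) : ℝ) * Δ ≤ ε / 3 := by
    have hle : (n - ψ₀ : ℕ) ≤ (Θ - ψ₀ + g Θ : ℕ) := by omega
    have hle' : ((n - ψ₀ : ℕ) : ℝ) ≤ ((Θ - ψ₀ + g Θ : ℕ) : ℝ) := by exact_mod_cast hle
    have h1 : ((n - ψ₀ : ℕ) : ℝ) * Δ ≤ ((Θ - ψ₀ + g Θ : ℕ) : ℝ) * Δ :=
      mul_le_mul_of_nonneg_right hle' hΔpos.le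
    have h2 : ((Θ - ψ₀ + g Θ : ℕ) : ℝ) * Δ = ε / 3 := by
      set D := ((Θ - ψ₀ + g Θ : ℕ) : ℝ) with hD
      have hne : D ≠ 0 := hDR.ne'
      rw [hΔ]
      field_simp
    linarith
  linarith
end

section
/- For every real m with 0 < m < π/2 and every λ ∈ [0,1], one has 1 − sin((1 − λ)·m)/sin(m) ≥ λ·cos(m). -/
/-- `μ = 1 - sin((1-λ)m)/sin m ≥ λ cos m` for `0 < m < π/2` and `λ ∈ [0,1]`. -/
theorem one_sub_sin_ratio_ge_lambda_cos
    (m lam : ℝ) (hm0 : 0 < m) (hm : m < Real.pi / 2)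
    (hlam : lam ∈ Set.Icc (0 : ℝ) 1) :
    1 - Real.sin ((1 - lam) * m) / Real.sin m ≥ lam * Real.cos m := by
  obtain ⟨hl0, hl1⟩ := hlam
  have hsin : 0 < Real.sin m :=
    Real.sin_pos_of_pos_of_lt_pi hm0 (hm.trans (half_lt_self Real.pi_pos))
  have hcos : 0 ≤ Real.cos m :=
    Real.cos_nonneg_of_mem_Icc ⟨by linarith [Real.pi_pos], hm.le⟩
  -- concavity: sin (lam * m) ≥ lam * sin m
  have hconc : lam * Real.sin m ≤ Real.sin (lam * m) := by
    have := strictConcaveOn_sin_Icc.concaveOn.2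
      (Set.mem_Icc.mpr ⟨le_rfl, Real.pi_pos.le⟩)
      (Set.mem_Icc.mpr ⟨hm0.le, by linarith [Real.pi_pos]⟩)
      (sub_nonneg.mpr hl1) hl0 (by ring)
    simpa using this
  rw [ge_iff_le, ← sub_nonneg]
  have key : Real.sin m - Real.sin ((1 - lam) * m) - lam * Real.cos m * Real.sin m ≥ 0 := by
    have hexp : (1 - lam) * m = m - lam * m := by ring
    rw [hexp, Real.sin_sub]
    have h1 : 0 ≤ Real.sin m * (1 - Real.cos (lam * m)) := by
      have := Real.cos_le_one (lam * m)
      nlinarith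
    nlinarith
  have : 1 - Real.sin ((1 - lam) * m) / Real.sin m - lam * Real.cos m
      = (Real.sin m - Real.sin ((1 - lam) * m) - lam * Real.cos m * Real.sin m) / Real.sin m := by
    field_simp
  rw [this]
  positivity
end

section
/- Let κ > 0 and M > 0 with M·√κ < π/2, let (λ_n)_{n≥1} be a sequence in [0,1], and define μ_n = 1 − sin((1 − λ_n)·M√κ)/sin(M√κ) for n ≥ 1. If θ : ℤ₊ → ℤ₊ satisfies ∑_{k=1}^{θ(n)} λ_{k+1} ≥ n for all n ≥ 1, then ∑_{k=1}^{θ̃(n)} μ_{k+1} ≥ n for all n ≥ 1, where θ̃(n) = θ(⌈1/cos(M√κ)⌉·n). -/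
open Real in
lemma mul_sin_le_sin_mul {a t : ℝ} (ha : 0 ≤ a) (ha' : a ≤ π) (ht : 0 ≤ t) (ht' : t ≤ 1) :
    t * Real.sin a ≤ Real.sin (t * a) := by
  have h := strictConcaveOn_sin_Icc.concaveOn.2 (Set.mem_Icc.2 ⟨ha, ha'⟩)
    (Set.mem_Icc.2 ⟨le_rfl, Real.pi_pos.le⟩) ht (by linarith : (0:ℝ) ≤ 1 - t) (by ring)
  simpa using h

open Real in
lemma mu_key {x t : ℝ} (hx : 0 < x) (hx' : x < π / 2) (ht : 0 ≤ t) (ht' : t ≤ 1) :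
    t * Real.cos x ≤ 1 - Real.sin ((1 - t) * x) / Real.sin x := by
  have hpi := Real.pi_pos
  have hs : 0 < Real.sin x := Real.sin_pos_of_pos_of_lt_pi hx (by linarith)
  rw [le_sub_iff_add_le, ← le_sub_iff_add_le', div_le_iff₀ hs, ← sub_nonneg]
  have hsub : Real.sin x - Real.sin ((1 - t) * x)
      = 2 * Real.sin (t * x / 2) * Real.cos ((2 - t) * x / 2) := by
    rw [Real.sin_sub_sin]; ring_nf
  have h1 : t * Real.sin (x / 2) ≤ Real.sin (t * (x / 2)) :=
    mul_sin_le_sin_mul (by linarith) (by linarith) ht ht'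
  have h2 : Real.cos x ≤ Real.cos ((2 - t) * x / 2) :=
    Real.cos_le_cos_of_nonneg_of_le_pi (by nlinarith) (by nlinarith) (by nlinarith)
  have hcx : 0 ≤ Real.cos x := Real.cos_nonneg_of_mem_Icc ⟨by linarith, hx'.le⟩
  have hsin2 : Real.sin x = 2 * Real.sin (x / 2) * Real.cos (x / 2) := by
    have := Real.sin_two_mul (x / 2); rw [← this]; ring_nf
  have hc2 : Real.cos (x / 2) ≤ 1 := Real.cos_le_one _
  have hs2 : 0 ≤ Real.sin (x / 2) := Real.sin_nonneg_of_nonneg_of_le_pi (by linarith) (by linarith)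
  have hst : 0 ≤ Real.sin (t * x / 2) := Real.sin_nonneg_of_nonneg_of_le_pi
    (by positivity) (by nlinarith)
  have hteq : t * (x / 2) = t * x / 2 := by ring
  rw [hteq] at h1
  have key : (0:ℝ) ≤ 2 * Real.sin (t * x / 2) * Real.cos ((2 - t) * x / 2)
        - t * Real.cos x * (2 * Real.sin (x / 2) * Real.cos (x / 2)) := by
    nlinarith [mul_le_mul_of_nonneg_right h1 hcx, mul_le_mul_of_nonneg_left h2 hst,
      mul_nonneg (mul_nonneg ht hs2) hcx, mul_nonneg hst hcx]
  have e : (1 - t * Real.cos x) * Real.sin x - Real.sin ((1 - t) * x)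
      = 2 * Real.sin (t * x / 2) * Real.cos ((2 - t) * x / 2)
        - t * Real.cos x * (2 * Real.sin (x / 2) * Real.cos (x / 2)) := by
    linear_combination hsub - t * Real.cos x * hsin2
  linarith [e, key]

/-- If `θ` is a rate of divergence for `∑ λ_{n+1}`, then
`θ̃(n) = θ(⌈1/cos(M√κ)⌉ n)` is a rate of divergence for `∑ μ_{n+1}`,
where `μ_n = 1 - sin((1-λ_n)M√κ)/sin(M√κ)`. -/
theorem mu_rate_of_divergence
    (κ M : ℝ) (hκ : 0 < κ) (hM : 0 < M) (hMκ : M * Real.sqrt κ < Real.pi / 2)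
    (lam : ℕ → ℝ) (hlam : ∀ n, 1 ≤ n → lam n ∈ Set.Icc (0 : ℝ) 1)
    (μ : ℕ → ℝ)
    (hμ : ∀ n, 1 ≤ n →
      μ n = 1 - Real.sin ((1 - lam n) * (M * Real.sqrt κ)) / Real.sin (M * Real.sqrt κ))
    (θ : ℕ → ℕ)
    (hθ : ∀ n : ℕ, 1 ≤ n → (n : ℝ) ≤ ∑ k ∈ Finset.Icc 1 (θ n), lam (k + 1)) :
    ∀ n : ℕ, 1 ≤ n →
      (n : ℝ) ≤ ∑ k ∈ Finset.Icc 1 (θ (⌈1 / Real.cos (M * Real.sqrt κ)⌉₊ * n)), μ (k + 1) := by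
  intro n hn
  set x := M * Real.sqrt κ with hxdef
  have hx : 0 < x := mul_pos hM (Real.sqrt_pos.2 hκ)
  have hc : 0 < Real.cos x := Real.cos_pos_of_mem_Ioo ⟨by linarith [Real.pi_pos], hMκ⟩
  set m := ⌈1 / Real.cos x⌉₊ * n with hmdef
  have hceil : 1 / Real.cos x ≤ (⌈1 / Real.cos x⌉₊ : ℝ) := Nat.le_ceil _
  have hm1 : 1 ≤ m := by
    have : 1 ≤ ⌈1 / Real.cos x⌉₊ := by
      rw [Nat.one_le_ceil_iff]; positivity
    calc 1 = 1 * 1 := by ring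
      _ ≤ ⌈1 / Real.cos x⌉₊ * n := Nat.mul_le_mul this hn
  have hsum : (m : ℝ) ≤ ∑ k ∈ Finset.Icc 1 (θ m), lam (k + 1) := hθ m hm1
  have hterm : ∀ k ∈ Finset.Icc 1 (θ m), lam (k + 1) * Real.cos x ≤ μ (k + 1) := by
    intro k _
    have hk1 : 1 ≤ k + 1 := Nat.le_add_left 1 k
    obtain ⟨hl0, hl1⟩ := hlam (k + 1) hk1
    rw [hμ (k + 1) hk1]
    exact mu_key hx hMκ hl0 hl1
  have hsum2 : (∑ k ∈ Finset.Icc 1 (θ m), lam (k + 1)) * Real.cos x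
      ≤ ∑ k ∈ Finset.Icc 1 (θ m), μ (k + 1) := by
    rw [Finset.sum_mul]
    exact Finset.sum_le_sum hterm
  have : (n : ℝ) ≤ (m : ℝ) * Real.cos x := by
    rw [hmdef]
    push_cast
    calc (n : ℝ) = (1 / Real.cos x * Real.cos x) * n := by field_simp
      _ ≤ ((⌈1 / Real.cos x⌉₊ : ℝ) * Real.cos x) * n := by
          apply mul_le_mul_of_nonneg_right _ (Nat.cast_nonneg n)
          exact mul_le_mul_of_nonneg_right hceil hc.le
      _ = (⌈1 / Real.cos x⌉₊ : ℝ) * n * Real.cos x := by ring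
  calc (n : ℝ) ≤ (m : ℝ) * Real.cos x := this
    _ ≤ (∑ k ∈ Finset.Icc 1 (θ m), lam (k + 1)) * Real.cos x :=
        mul_le_mul_of_nonneg_right hsum hc.le
    _ ≤ _ := hsum2
end

section
/- With the notation of the context, S2 − S3 − S4·cos(d(x,v)√κ) ≤ 2·S4·(sin²(d(x,v)√κ/2) − sin²(d(x,w)√κ/2)). -/
open Real

/-- The inequality S2 − S3 − S4·cos(d(x,v)√κ) ≤ 2·S4·(sin²(d(x,v)√κ/2) − sin²(d(x,w)√κ/2)). -/
theorem geom_S2_sub_S3_sub_S4cos_le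
    {X : Type*} [MetricSpace X] (κ M : ℝ) (hκ : 0 < κ)
    (hM0 : 0 < M * Real.sqrt κ) (hM : M * Real.sqrt κ < Real.pi / 2)
    (x y z w v : X)
    (hbound : ∀ p ∈ ({x, y, z, w, v} : Set X), ∀ q ∈ ({x, y, z, w, v} : Set X),
      dist p q ≤ M)
    (hw : dist x w + dist w y = dist x y)
    (hv : dist x v + dist v z = dist x z) :
    Real.sin (dist x y * Real.sqrt κ) * Real.sin (dist x z * Real.sqrt κ) -
    Real.sin (dist x w * Real.sqrt κ) * Real.sin (dist x z * Real.sqrt κ) -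
    Real.sin (dist y w * Real.sqrt κ) * Real.sin (dist x z * Real.sqrt κ) *
      Real.cos (dist x v * Real.sqrt κ) ≤
    2 * (Real.sin (dist y w * Real.sqrt κ) * Real.sin (dist x z * Real.sqrt κ)) *
      (Real.sin (dist x v * Real.sqrt κ / 2) ^ 2 - Real.sin (dist x w * Real.sqrt κ / 2) ^ 2) := by
  have hκ' : 0 ≤ Real.sqrt κ := Real.sqrt_nonneg κ
  have hxw : dist x w ≤ M := hbound x (by simp) w (by simp)
  have hxz : dist x z ≤ M := hbound x (by simp) z (by simp)
  have hπ : Real.pi / 2 ≤ Real.pi := by linarith [Real.pi_pos]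
  have hle : ∀ r : ℝ, 0 ≤ r → r ≤ M → r * Real.sqrt κ ≤ Real.pi := by
    intro r hr hrM
    calc r * Real.sqrt κ ≤ M * Real.sqrt κ := by
          exact mul_le_mul_of_nonneg_right hrM hκ'
      _ ≤ Real.pi := by linarith
  have ha0 : 0 ≤ dist x w * Real.sqrt κ := mul_nonneg dist_nonneg hκ'
  have hc0 : 0 ≤ dist x z * Real.sqrt κ := mul_nonneg dist_nonneg hκ'
  have hsa : 0 ≤ Real.sin (dist x w * Real.sqrt κ) :=
    Real.sin_nonneg_of_nonneg_of_le_pi ha0 (hle _ dist_nonneg hxw)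
  have hsc : 0 ≤ Real.sin (dist x z * Real.sqrt κ) :=
    Real.sin_nonneg_of_nonneg_of_le_pi hc0 (hle _ dist_nonneg hxz)
  have hcb : Real.cos (dist y w * Real.sqrt κ) ≤ 1 := Real.cos_le_one _
  have hxy : dist x y * Real.sqrt κ = dist x w * Real.sqrt κ + dist y w * Real.sqrt κ := by
    rw [dist_comm y w, ← add_mul, hw]
  rw [hxy, Real.sin_add]
  have hhv : Real.sin (dist x v * Real.sqrt κ / 2) ^ 2
      = (1 - Real.cos (dist x v * Real.sqrt κ)) / 2 := by
    rw [Real.sin_sq_eq_half_sub]; ring_nf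
  have hhw : Real.sin (dist x w * Real.sqrt κ / 2) ^ 2
      = (1 - Real.cos (dist x w * Real.sqrt κ)) / 2 := by
    rw [Real.sin_sq_eq_half_sub]; ring_nf
  rw [hhv, hhw]
  nlinarith [mul_nonneg (mul_nonneg hsc hsa) (sub_nonneg.mpr hcb)]
end

section
/- With the notation of the context, S3 − S1 − S5·cos(d(x,y)√κ) ≤ 2·S5·(sin²(d(x,y)√κ/2) − sin²(d(x,v)√κ/2)). -/
open Real

/-- The inequality S3 − S1 − S5·cos(d(x,y)√κ) ≤ 2·S5·(sin²(d(x,y)√κ/2) − sin²(d(x,v)√κ/2)). -/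
theorem geom_S3_sub_S1_sub_S5cos_le
    {X : Type*} [MetricSpace X] (κ M : ℝ) (hκ : 0 < κ)
    (hM0 : 0 < M * Real.sqrt κ) (hM : M * Real.sqrt κ < Real.pi / 2)
    (x y z w v : X)
    (hbound : ∀ p ∈ ({x, y, z, w, v} : Set X), ∀ q ∈ ({x, y, z, w, v} : Set X),
      dist p q ≤ M)
    (hw : dist x w + dist w y = dist x y)
    (hv : dist x v + dist v z = dist x z) :
    Real.sin (dist x w * Real.sqrt κ) * Real.sin (dist x z * Real.sqrt κ) -
    Real.sin (dist x w * Real.sqrt κ) * Real.sin (dist x v * Real.sqrt κ) -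
    Real.sin (dist x w * Real.sqrt κ) * Real.sin (dist z v * Real.sqrt κ) *
      Real.cos (dist x y * Real.sqrt κ) ≤
    2 * (Real.sin (dist x w * Real.sqrt κ) * Real.sin (dist z v * Real.sqrt κ)) *
      (Real.sin (dist x y * Real.sqrt κ / 2) ^ 2 - Real.sin (dist x v * Real.sqrt κ / 2) ^ 2) := by
  set s := Real.sqrt κ with hsdef
  have hs : 0 ≤ s := Real.sqrt_nonneg _
  have hxmem : x ∈ ({x, y, z, w, v} : Set X) := by simp
  have hwmem : w ∈ ({x, y, z, w, v} : Set X) := by simp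
  have hvmem : v ∈ ({x, y, z, w, v} : Set X) := by simp
  have hpi : Real.pi / 2 ≤ Real.pi := by
    have := Real.pi_pos; linarith
  -- nonnegativity of sines of small angles
  have key : ∀ p ∈ ({x, y, z, w, v} : Set X), ∀ q ∈ ({x, y, z, w, v} : Set X),
      0 ≤ Real.sin (dist p q * s) := by
    intro p hp q hq
    apply Real.sin_nonneg_of_nonneg_of_le_pi
    · exact mul_nonneg dist_nonneg hs
    · have h1 : dist p q * s ≤ M * s := by
        apply mul_le_mul_of_nonneg_right (hbound p hp q hq) hs
      linarith [hM, hpi]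
  have hsa : 0 ≤ Real.sin (dist x w * s) := key x hxmem w hwmem
  have hsc : 0 ≤ Real.sin (dist x v * s) := key x hxmem v hvmem
  have hce : Real.cos (dist z v * s) ≤ 1 := Real.cos_le_one _
  -- angle addition: b = c + e
  have hb : dist x z * s = dist x v * s + dist z v * s := by
    rw [dist_comm z v]; rw [← hv]; ring
  have hsinb : Real.sin (dist x z * s) =
      Real.sin (dist x v * s) * Real.cos (dist z v * s) +
      Real.cos (dist x v * s) * Real.sin (dist z v * s) := by
    rw [hb, Real.sin_add]
  -- half-angle identities
  have half : ∀ t : ℝ, Real.sin (t / 2) ^ 2 = (1 - Real.cos t) / 2 := by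
    intro t
    have h := Real.cos_sq (t / 2)
    have h2 : 2 * (t / 2) = t := by ring
    rw [h2] at h
    have h3 := Real.sin_sq_add_cos_sq (t / 2)
    linarith
  have h1 : Real.sin (dist x y * s / 2) ^ 2 = (1 - Real.cos (dist x y * s)) / 2 := half _
  have h2 : Real.sin (dist x v * s / 2) ^ 2 = (1 - Real.cos (dist x v * s)) / 2 := half _
  rw [h1, h2, hsinb]
  nlinarith [mul_nonneg hsa hsc, mul_nonneg (mul_nonneg hsa hsc) (sub_nonneg.mpr hce)]
end

section
/- With the notation of the context, L1/(1 − L1) ≤ 1/(s·cos(M√κ)). -/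
open Real

private lemma key_sin_sub {θ s : ℝ} (hθ0 : 0 < θ) (hθ : θ < Real.pi / 2)
    (hs0 : 0 < s) (hs1 : s < 1) :
    s * θ * Real.cos θ ≤ Real.sin θ - Real.sin ((1 - s) * θ) := by
  have hπ : 0 < Real.pi := Real.pi_pos
  rw [Real.sin_sub_sin]
  have h1 : (θ - (1 - s) * θ) / 2 = s * θ / 2 := by ring
  have h2 : (θ + (1 - s) * θ) / 2 = (2 - s) * θ / 2 := by ring
  rw [h1, h2]
  have ht0 : 0 < s * θ / 2 := by positivity
  have ht2 : s * θ / 2 < Real.pi / 2 := by nlinarith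
  have hcos1 : 0 < Real.cos (s * θ / 2) :=
    Real.cos_pos_of_mem_Ioo ⟨by linarith, ht2⟩
  have htan := Real.lt_tan ht0 ht2
  rw [Real.tan_eq_sin_div_cos, lt_div_iff₀ hcos1] at htan
  -- htan : s*θ/2 * cos (s*θ/2) < sin (s*θ/2)
  have hu0 : 0 < (2 - s) * θ / 2 := by nlinarith
  have hu2 : (2 - s) * θ / 2 < Real.pi / 2 := by nlinarith
  have hcos2 : 0 < Real.cos ((2 - s) * θ / 2) :=
    Real.cos_pos_of_mem_Ioo ⟨by linarith, hu2⟩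
  have hprod : Real.cos (s * θ / 2) * Real.cos ((2 - s) * θ / 2)
      = (Real.cos ((1 - s) * θ) + Real.cos θ) / 2 := by
    have e1 : Real.cos θ = Real.cos (s * θ / 2) * Real.cos ((2 - s) * θ / 2)
        - Real.sin (s * θ / 2) * Real.sin ((2 - s) * θ / 2) := by
      rw [← Real.cos_add]; congr 1; ring
    have e2 : Real.cos ((1 - s) * θ) = Real.cos ((2 - s) * θ / 2) * Real.cos (s * θ / 2)
        + Real.sin ((2 - s) * θ / 2) * Real.sin (s * θ / 2) := by
      rw [← Real.cos_sub]; congr 1; ring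
    rw [e1, e2]; ring
  have hmono : Real.cos θ ≤ Real.cos ((1 - s) * θ) :=
    Real.cos_le_cos_of_nonneg_of_le_pi (by nlinarith) (by linarith) (by nlinarith)
  nlinarith [mul_le_mul_of_nonneg_right htan.le hcos2.le]

/-- With `L1 = sin(d(x,v)√κ)/sin(d(x,z)√κ)`, one has
`L1/(1 - L1) ≤ 1/(s·cos(M√κ))`. -/
theorem geom_L1_div_one_sub_L1_le
    {X : Type*} [MetricSpace X] (κ M : ℝ) (hκ : 0 < κ)
    (hM0 : 0 < M * Real.sqrt κ) (hM : M * Real.sqrt κ < Real.pi / 2)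
    (x z v : X) (hxz : x ≠ z) (hxzM : dist x z ≤ M)
    (s : ℝ) (hs0 : 0 < s) (hs1 : s < 1)
    (hxv : dist x v = (1 - s) * dist x z)
    (hvz : dist v z = s * dist x z) :
    (Real.sin (dist x v * Real.sqrt κ) / Real.sin (dist x z * Real.sqrt κ)) /
      (1 - Real.sin (dist x v * Real.sqrt κ) / Real.sin (dist x z * Real.sqrt κ)) ≤
    1 / (s * Real.cos (M * Real.sqrt κ)) := by
  have hπ : 0 < Real.pi := Real.pi_pos
  have hr : 0 < Real.sqrt κ := Real.sqrt_pos.mpr hκ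
  have hd0 : 0 < dist x z := dist_pos.mpr hxz
  set θ : ℝ := dist x z * Real.sqrt κ with hθdef
  have hθ0 : 0 < θ := by positivity
  have hθM : θ ≤ M * Real.sqrt κ := mul_le_mul_of_nonneg_right hxzM hr.le
  have hθ : θ < Real.pi / 2 := lt_of_le_of_lt hθM hM
  have hxvθ : dist x v * Real.sqrt κ = (1 - s) * θ := by rw [hxv, hθdef]; ring
  rw [hxvθ]
  set A := Real.sin ((1 - s) * θ)
  set B := Real.sin θ
  have hB : 0 < B := Real.sin_pos_of_pos_of_lt_pi hθ0 (by linarith)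
  have hAB : A < B := by
    apply Real.sin_lt_sin_of_lt_of_le_pi_div_two (by nlinarith) hθ.le
    nlinarith
  have hBA : 0 < B - A := by linarith
  have hcosM : 0 < Real.cos (M * Real.sqrt κ) :=
    Real.cos_pos_of_mem_Ioo ⟨by linarith, hM⟩
  have hden : 0 < s * Real.cos (M * Real.sqrt κ) := by positivity
  have hLHS : A / B / (1 - A / B) = A / (B - A) := by
    rw [one_sub_div hB.ne']
    field_simp
  rw [hLHS, div_le_div_iff₀ hBA hden]
  -- A * (s * cos (M√κ)) ≤ (B - A) * 1
  have hkey := key_sin_sub hθ0 hθ hs0 hs1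
  have hA_le : A ≤ θ := le_trans (Real.sin_le (by nlinarith)) (by nlinarith)
  have hA0 : 0 ≤ A := Real.sin_nonneg_of_nonneg_of_le_pi (by nlinarith) (by nlinarith)
  have hcosθ : Real.cos (M * Real.sqrt κ) ≤ Real.cos θ :=
    Real.cos_le_cos_of_nonneg_of_le_pi hθ0.le (by linarith) hθM
  calc A * (s * Real.cos (M * Real.sqrt κ)) ≤ θ * (s * Real.cos θ) := by
        apply mul_le_mul hA_le (mul_le_mul_of_nonneg_left hcosθ hs0.le) (by positivity) hθ0.le
    _ ≤ 1 * (B - A) := by nlinarith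
end

section
/- For all real a, b with 0 ≤ a ≤ π and 0 ≤ b ≤ π, one has sin²((a+b)/2) ≤ sin²(a/2) + sin²(b/2) + (1/2)·sin(a). -/
/-- For `a, b ∈ [0, π]`: `sin²((a+b)/2) ≤ sin²(a/2) + sin²(b/2) + (1/2)·sin a`. -/
theorem sin_sq_add_div_two_le
    (a b : ℝ) (ha0 : 0 ≤ a) (haπ : a ≤ Real.pi) (hb0 : 0 ≤ b) (hbπ : b ≤ Real.pi) :
    Real.sin ((a + b) / 2) ^ 2 ≤
      Real.sin (a / 2) ^ 2 + Real.sin (b / 2) ^ 2 + (1 / 2) * Real.sin a := by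
  have h1 : Real.sin ((a + b) / 2) = Real.sin (a/2) * Real.cos (b/2) + Real.cos (a/2) * Real.sin (b/2) := by
    rw [show (a+b)/2 = a/2 + b/2 by ring, Real.sin_add]
  have hsa : Real.sin a = 2 * Real.sin (a/2) * Real.cos (a/2) := by
    rw [show a = 2 * (a/2) by ring, Real.sin_two_mul]; ring_nf
  have hpi := Real.pi_pos
  have hsa0 : 0 ≤ Real.sin (a/2) := Real.sin_nonneg_of_nonneg_of_le_pi (by linarith) (by linarith)
  have hca0 : 0 ≤ Real.cos (a/2) := Real.cos_nonneg_of_mem_Icc ⟨by linarith, by linarith⟩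
  have hsb0 : 0 ≤ Real.sin (b/2) := Real.sin_nonneg_of_nonneg_of_le_pi (by linarith) (by linarith)
  have hcb0 : 0 ≤ Real.cos (b/2) := Real.cos_nonneg_of_mem_Icc ⟨by linarith, by linarith⟩
  have hsb1 : Real.sin b ≤ 1 := Real.sin_le_one b
  have hsbm : Real.sin b = 2 * Real.sin (b/2) * Real.cos (b/2) := by
    rw [show b = 2 * (b/2) by ring, Real.sin_two_mul]; ring_nf
  have hpa := Real.sin_sq_add_cos_sq (a/2)
  have hpb := Real.sin_sq_add_cos_sq (b/2)
  rw [h1, hsa]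
  nlinarith [sq_nonneg (Real.sin (a/2)), sq_nonneg (Real.sin (b/2)),
    mul_nonneg hsa0 hca0, mul_nonneg hsb0 hcb0,
    mul_nonneg (mul_nonneg hsa0 hca0) (sq_nonneg (Real.sin (b/2))),
    mul_le_of_le_one_right (mul_nonneg hsa0 hca0) hsb1]
end

section
/- Let m, δ, a, b be reals with 0 < m < π/2, 0 < δ < 1, 0 ≤ a ≤ m, 0 ≤ b ≤ m and a ≤ b + δ, and let i, j ∈ ℕ. Then sin²( (i/(i+1))·a/2 ) ≤ sin²( (j/(j+1))·b/2 ) + sin²( m/(2(j+1)) ) + 2·sin( m/(2(j+1)) ) + sin²(δ/2) + 2·sin(δ/2)·sin(m/2). -/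
open Real
set_option maxHeartbeats 1000000

private lemma sin_add_le' (x y : ℝ) (hx : 0 ≤ x) (hx' : x ≤ π) (hy : 0 ≤ y) (hy' : y ≤ π) :
    Real.sin (x + y) ≤ Real.sin x + Real.sin y := by
  have h1 := Real.sin_add x y
  have h2 := Real.cos_le_one x
  have h3 := Real.cos_le_one y
  have h4 := Real.sin_nonneg_of_nonneg_of_le_pi hx hx'
  have h5 := Real.sin_nonneg_of_nonneg_of_le_pi hy hy'
  nlinarith

/-- Real-number content of the lemma comparing `γ_n^i` and `γ_n^j`. -/
theorem gamma_comparison_ineq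
    (m δ a b : ℝ) (hm0 : 0 < m) (hm : m < Real.pi / 2)
    (hδ0 : 0 < δ) (hδ1 : δ < 1)
    (ha0 : 0 ≤ a) (ham : a ≤ m) (hb0 : 0 ≤ b) (hbm : b ≤ m)
    (hab : a ≤ b + δ) (i j : ℕ) :
    Real.sin ((i / (i + 1) : ℝ) * a / 2) ^ 2 ≤
      Real.sin ((j / (j + 1) : ℝ) * b / 2) ^ 2 +
      Real.sin (m / (2 * (j + 1))) ^ 2 + 2 * Real.sin (m / (2 * (j + 1))) +
      Real.sin (δ / 2) ^ 2 + 2 * Real.sin (δ / 2) * Real.sin (m / 2) := by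
  have hpi : (3.14 : ℝ) ≤ π := by linarith [Real.pi_gt_d6]
  have hi1 : (0:ℝ) < (i:ℝ) + 1 := by positivity
  have hj1 : (0:ℝ) < (j:ℝ) + 1 := by positivity
  have hifrac : (i:ℝ) / ((i:ℝ) + 1) ≤ 1 := by rw [div_le_one hi1]; linarith
  have hifrac0 : (0:ℝ) ≤ (i:ℝ) / ((i:ℝ) + 1) := by positivity
  have hjfrac : (j:ℝ) / ((j:ℝ) + 1) ≤ 1 := by rw [div_le_one hj1]; linarith
  have hjfrac0 : (0:ℝ) ≤ (j:ℝ) / ((j:ℝ) + 1) := by positivity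
  set u := ((j:ℝ) / ((j:ℝ) + 1)) * b / 2 with hu
  set w := Real.sin (m / (2 * ((j:ℝ) + 1))) with hw
  set s := Real.sin (δ / 2) with hs
  have harg1_0 : (0:ℝ) ≤ ((i:ℝ) / ((i:ℝ) + 1)) * a / 2 := by positivity
  have harg1 : ((i:ℝ) / ((i:ℝ) + 1)) * a / 2 ≤ (b + δ) / 2 := by
    have : ((i:ℝ) / ((i:ℝ) + 1)) * a ≤ a := by nlinarith
    linarith
  have hbd2 : (b + δ) / 2 ≤ π / 2 := by linarith
  -- step A
  have hA : Real.sin (((i:ℝ) / ((i:ℝ) + 1)) * a / 2) ≤ Real.sin ((b + δ) / 2) :=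
    Real.sin_le_sin_of_le_of_le_pi_div_two (by linarith [Real.pi_pos]) hbd2 harg1
  -- step B
  have hB : Real.sin ((b + δ) / 2) ≤ Real.sin (b / 2) + s := by
    have h := sin_add_le' (b / 2) (δ / 2) (by linarith) (by linarith) (by linarith) (by linarith)
    have he : (b + δ) / 2 = b / 2 + δ / 2 := by ring
    rw [he]; exact h
  -- step C
  have hu0 : (0:ℝ) ≤ u := by positivity
  have hub : u ≤ b / 2 := by rw [hu]; nlinarith
  have hv0 : (0:ℝ) ≤ b / (2 * ((j:ℝ) + 1)) := by positivity
  have hvb : b / (2 * ((j:ℝ) + 1)) ≤ b / 2 := by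
    gcongr
    · linarith
  have hsinv_le : Real.sin (b / (2 * ((j:ℝ) + 1))) ≤ w := by
    rw [hw]
    refine Real.sin_le_sin_of_le_of_le_pi_div_two (by linarith [Real.pi_pos]) ?_ ?_
    · have : m / (2 * ((j:ℝ) + 1)) ≤ m / 2 := by gcongr; linarith
      linarith
    · gcongr
  have hC : Real.sin (b / 2) ≤ Real.sin u + w := by
    have he : b / 2 = u + b / (2 * ((j:ℝ) + 1)) := by
      rw [hu]; field_simp
    have h := sin_add_le' u (b / (2 * ((j:ℝ) + 1))) hu0 (by linarith) hv0 (by linarith)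
    rw [he]; linarith
  -- assemble
  have hsb0 : (0:ℝ) ≤ Real.sin (b / 2) :=
    Real.sin_nonneg_of_nonneg_of_le_pi (by linarith) (by linarith)
  have hsbm : Real.sin (b / 2) ≤ Real.sin (m / 2) :=
    Real.sin_le_sin_of_le_of_le_pi_div_two (by linarith [Real.pi_pos]) (by linarith) (by linarith)
  have hs0 : (0:ℝ) ≤ s := Real.sin_nonneg_of_nonneg_of_le_pi (by linarith) (by linarith)
  have hw0 : (0:ℝ) ≤ w := by
    rw [hw]
    exact Real.sin_nonneg_of_nonneg_of_le_pi (by positivity)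
      (by
        have : m / (2 * ((j:ℝ) + 1)) ≤ m / 2 := by gcongr; linarith
        linarith)
  have hsu1 : Real.sin u ≤ 1 := Real.sin_le_one u
  have hsu0 : (0:ℝ) ≤ Real.sin u :=
    Real.sin_nonneg_of_nonneg_of_le_pi hu0 (by linarith)
  have h1 : Real.sin (((i:ℝ) / ((i:ℝ) + 1)) * a / 2) ^ 2 ≤ (Real.sin (b / 2) + s) ^ 2 := by
    apply pow_le_pow_left₀ (Real.sin_nonneg_of_nonneg_of_le_pi harg1_0 (by linarith)) (by linarith)
  have h2 : Real.sin (b / 2) ^ 2 ≤ (Real.sin u + w) ^ 2 := pow_le_pow_left₀ hsb0 hC 2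
  nlinarith [h1, h2, mul_le_mul_of_nonneg_left hsbm (by linarith : (0:ℝ) ≤ 2 * s),
    mul_nonneg hs0 hsb0, mul_nonneg hsu0 hw0]
end
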